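/- Under the Lazy Set axioms A0–A2, the relation <' = < ∪ ⇒ has no cycles: there is no finite sequence X₀ <' X₁ <' ⋯ <' Xₙ with X₀ = Xₙ and n ≥ 1. -/
import Mathlib


/-- Event type: Add, Rem, or Contains. -/
inductive EType | add | rem | cnt
deriving DecidableEq

/-- Status of an event: 0, 1, or f (failed). -/
inductive Status | s0 | s1 | sf
deriving DecidableEq

open EType Status

/-- A Tarskian system execution satisfying the Lazy Set axioms A0–A2.
Events are typed Add/Rem/Cnt; Add and Rem events are actions (with
Begin(E) = End(E) = E) and the actions are linearly ordered by the temporal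
precedence relation `lt`; Cnt events are high-level with Begin(E) < End(E);
`γ` is defined on the Op¹ events and satisfies axioms A1 and A2. -/
structure LazySys where
  E : Type
  lt : E → E → Prop
  typ : E → EType
  χ : E → Status
  kval : E → ℕ
  Begin : E → E
  End' : E → E
  γ : E → E
  action : E → Prop
  lt_irrefl : ∀ e, ¬ lt e e
  lt_trans : ∀ a b c, lt a b → lt b c → lt a c
  act_lin : ∀ a b, action a → action b → a ≠ b → lt a b ∨ lt b a
  addRem_action : ∀ e, typ e ≠ EType.cnt →
    action e ∧ Begin e = e ∧ End' e = e
  begin_end_action : ∀ e, action (Begin e) ∧ action (End' e)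
  cnt_interval : ∀ e, typ e = EType.cnt → lt (Begin e) (End' e)
  lt_iff : ∀ a b, lt a b ↔ lt (End' a) (Begin b)
  A1 : ∀ A, χ A = Status.s1 →
    typ (γ A) = EType.add ∧ χ (γ A) = Status.s0 ∧ kval (γ A) = kval A ∧
    lt (γ A) (End' A) ∧
    ¬ ∃ R, typ R = EType.rem ∧ χ R = Status.s1 ∧ γ R = γ A ∧
      lt (γ A) R ∧ lt R A
  A2 : ∀ A B, typ A = EType.add → χ A = Status.s0 → χ B = Status.s0 →
    lt A B → kval A = kval B →
    ∃ R, typ R = EType.rem ∧ χ R = Status.s1 ∧ γ R = A ∧ lt R (End' B)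

/-- The auxiliary relation ⇒ used in the linearization proof. -/
def LazySys.arrow (S : LazySys) (X Y : S.E) : Prop :=
  (S.typ Y = EType.cnt ∧ S.χ Y = Status.s1 ∧ X = S.γ Y) ∨
  (S.typ X = EType.cnt ∧ S.χ X = Status.s1 ∧
    S.typ Y = EType.rem ∧ S.χ Y = Status.s1 ∧ S.γ Y = S.γ X) ∨
  (S.typ X = EType.rem ∧ S.χ X = Status.s1 ∧
    S.typ Y = EType.cnt ∧ S.χ Y = Status.s0 ∧
    S.kval X = S.kval Y ∧ ¬ S.lt Y X ∧ S.lt (S.γ X) Y) ∨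
  (S.typ X = EType.cnt ∧ S.χ X = Status.s0 ∧
    S.typ Y = EType.add ∧ S.χ Y = Status.s0 ∧
    S.kval X = S.kval Y ∧ ¬ S.lt Y X)

/-- The union relation <' = < ∪ ⇒. -/
def LazySys.lt' (S : LazySys) (X Y : S.E) : Prop :=
  S.lt X Y ∨ S.arrow X Y

namespace Stmt10Aux

variable {S : LazySys}

/-- X ⇒ Y implies ¬ (Y < X). -/
lemma no_lt_back {X Y : S.E} (h : S.arrow X Y) : ¬ S.lt Y X := by
  rcases h with ⟨hYt, hYχ, hXγ⟩ | ⟨hXt, hXχ, hYt, hYχ, hγ⟩ |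
    ⟨_, _, _, _, _, h, _⟩ | ⟨_, _, _, _, _, h⟩
  · intro hlt
    obtain ⟨hat, _, _, halt, _⟩ := S.A1 Y hYχ
    have hB : S.Begin (S.γ Y) = S.γ Y := (S.addRem_action _ (by rw [hat]; decide)).2.1
    have h1 := (S.lt_iff Y X).1 hlt
    rw [hXγ, hB] at h1
    exact S.lt_irrefl _ (S.lt_trans _ _ _ halt h1)
  · intro hlt
    obtain ⟨_, _, _, _, hno⟩ := S.A1 X hXχ
    obtain ⟨_, _, _, hRlt, _⟩ := S.A1 Y hYχ
    have hEnd : S.End' Y = Y := (S.addRem_action Y (by rw [hYt]; decide)).2.2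
    rw [hEnd, hγ] at hRlt
    exact hno ⟨Y, hYt, hYχ, hγ, hRlt, hlt⟩
  · exact h
  · exact h

/-- < composed with a non-cnt target that is not before the middle. -/
lemma M1 {X Y Z : S.E} (hXY : S.lt X Y) (hZY : ¬ S.lt Z Y)
    (hZ : S.typ Z ≠ EType.cnt) : S.lt X Z := by
  obtain ⟨hact, hB, hEn⟩ := S.addRem_action Z hZ
  have h1 : S.lt (S.End' X) (S.Begin Y) := (S.lt_iff X Y).1 hXY
  have h2 : ¬ S.lt Z (S.Begin Y) := by
    intro h; exact hZY ((S.lt_iff Z Y).2 (by rw [hEn]; exact h))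
  have hBYact : S.action (S.Begin Y) := (S.begin_end_action Y).1
  apply (S.lt_iff X Z).2
  rw [hB]
  rcases eq_or_ne Z (S.Begin Y) with he | hne
  · rw [he]; exact h1
  · rcases S.act_lin Z (S.Begin Y) hact hBYact hne with h | h
    · exact absurd h h2
    · exact S.lt_trans _ _ _ h1 h

/-- arrow composed with < when the source is an action. -/
lemma M2 {X Y Z : S.E} (hYX : ¬ S.lt Y X) (hYZ : S.lt Y Z)
    (hX : S.typ X ≠ EType.cnt) : S.lt X Z := by
  obtain ⟨hact, hB, hEn⟩ := S.addRem_action X hX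
  have h1 : S.lt (S.End' Y) (S.Begin Z) := (S.lt_iff Y Z).1 hYZ
  have h2 : ¬ S.lt (S.End' Y) X := by
    intro h; exact hYX ((S.lt_iff Y X).2 (by rw [hB]; exact h))
  have hEYact : S.action (S.End' Y) := (S.begin_end_action Y).2
  apply (S.lt_iff X Z).2
  rw [hEn]
  rcases eq_or_ne X (S.End' Y) with he | hne
  · rw [he]; exact h1
  · rcases S.act_lin X (S.End' Y) hact hEYact hne with h | h
    · exact S.lt_trans _ _ _ h h1
    · exact absurd h h2

/-- Composition of arrow cases (c) then (d): X < Z. -/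
lemma comp_cd {X Y Z : S.E}
    (hXt : S.typ X = EType.rem) (hXχ : S.χ X = Status.s1)
    (hYt : S.typ Y = EType.cnt) (hYχ : S.χ Y = Status.s0)
    (hk : S.kval X = S.kval Y) (hnYX : ¬ S.lt Y X) (hgY : S.lt (S.γ X) Y)
    (hZt : S.typ Z = EType.add) (hZχ : S.χ Z = Status.s0)
    (hk2 : S.kval Y = S.kval Z) (hnZY : ¬ S.lt Z Y) : S.lt X Z := by
  obtain ⟨hgt, hgχ, hgk, hgX, hnoX⟩ := S.A1 X hXχ
  have hgact := S.addRem_action (S.γ X) (by rw [hgt]; decide)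
  have hZact := S.addRem_action Z (by rw [hZt]; decide)
  have hXact := S.addRem_action X (by rw [hXt]; decide)
  rw [hXact.2.2] at hgX
  have hne : Z ≠ S.γ X := by rintro rfl; exact hnZY hgY
  have hnZg : ¬ S.lt Z (S.γ X) := fun h => hnZY (S.lt_trans _ _ _ h hgY)
  have hgZ : S.lt (S.γ X) Z := by
    rcases S.act_lin _ _ hgact.1 hZact.1 hne.symm with h | h
    · exact h
    · exact absurd h hnZg
  obtain ⟨R', hRt, hRχ, hRγ, hRlt⟩ :=
    S.A2 (S.γ X) Z hgt hgχ hZχ hgZ (by rw [hgk, hk, hk2])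
  rw [hZact.2.2] at hRlt
  have hRact := S.addRem_action R' (by rw [hRt]; decide)
  obtain ⟨_, _, _, hgR', hnoR'⟩ := S.A1 R' hRχ
  rw [hRact.2.2, hRγ] at hgR'
  rcases eq_or_ne R' X with he | hne2
  · rw [← he]; exact hRlt
  · rcases S.act_lin _ _ hRact.1 hXact.1 hne2 with h | h
    · exact absurd ⟨R', hRt, hRχ, hRγ, hgR', h⟩ hnoX
    · exact absurd ⟨X, hXt, hXχ, hRγ.symm, by rw [hRγ]; exact hgX, h⟩ hnoR'

/-- An arrow of case (a) composes with any successor <' edge. -/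
lemma caseA {X Y Z : S.E} (hYt : S.typ Y = EType.cnt) (hYχ : S.χ Y = Status.s1)
    (hXγ : X = S.γ Y) (h2 : S.lt' Y Z) : S.lt X Z := by
  obtain ⟨hat, _, _, _, _⟩ := S.A1 Y hYχ
  have harr : S.arrow X Y := Or.inl ⟨hYt, hYχ, hXγ⟩
  have hXt : S.typ X = EType.add := by rw [hXγ]; exact hat
  rcases h2 with hlt | harr2
  · exact M2 (no_lt_back harr) hlt (by rw [hXt]; decide)
  · rcases harr2 with ⟨hZt, hZχ, hYγ'⟩ | ⟨_, _, hZt, hZχ, hγ⟩ |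
      ⟨hYt', _, _, _, _, _, _⟩ | ⟨_, hYχ', _, _, _, _⟩
    · obtain ⟨hat2, _, _, _, _⟩ := S.A1 Z hZχ
      rw [← hYγ', hYt] at hat2
      exact absurd hat2 (by decide)
    · obtain ⟨_, _, _, hZlt, _⟩ := S.A1 Z hZχ
      have hEnd : S.End' Z = Z := (S.addRem_action Z (by rw [hZt]; decide)).2.2
      rw [hEnd, hγ, ← hXγ] at hZlt
      exact hZlt
    · rw [hYt] at hYt'; exact absurd hYt' (by decide)
    · rw [hYχ] at hYχ'; exact absurd hYχ' (by decide)

/-- An arrow of case (c) composes with any successor <' edge. -/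
lemma caseC {X Y Z : S.E}
    (hXt : S.typ X = EType.rem) (hXχ : S.χ X = Status.s1)
    (hYt : S.typ Y = EType.cnt) (hYχ : S.χ Y = Status.s0)
    (hk : S.kval X = S.kval Y) (hnYX : ¬ S.lt Y X) (hgY : S.lt (S.γ X) Y)
    (h2 : S.lt' Y Z) : S.lt X Z := by
  rcases h2 with hlt | harr2
  · exact M2 hnYX hlt (by rw [hXt]; decide)
  · rcases harr2 with ⟨hZt, hZχ, hYγ'⟩ | ⟨_, hYχ', _, _, _⟩ |
      ⟨hYt', _, _, _, _, _, _⟩ | ⟨_, _, hZt, hZχ, hk2, hnZY⟩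
    · obtain ⟨hat2, _, _, _, _⟩ := S.A1 Z hZχ
      rw [← hYγ', hYt] at hat2
      exact absurd hat2 (by decide)
    · rw [hYχ] at hYχ'; exact absurd hYχ' (by decide)
    · rw [hYt] at hYt'; exact absurd hYt' (by decide)
    · exact comp_cd hXt hXχ hYt hYχ hk hnYX hgY hZt hZχ hk2 hnZY

/-- If the first edge is a plain <, some pair among the next edges composes. -/
lemma T3 {X Y Z U : S.E} (e2 : S.lt X Y) (e3 : S.lt' Y Z) (e4 : S.lt' Z U) :
    S.lt X Z ∨ S.lt Y U := by
  rcases e3 with hlt | harr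
  · exact Or.inl (S.lt_trans _ _ _ e2 hlt)
  · rcases harr with ⟨hZt, hZχ, hYγ⟩ | ⟨hYt, hYχ, hZt, hZχ, hγ⟩ |
      ⟨hYt, hYχ, hZt, hZχ, hk, hn, hg⟩ | ⟨hYt, hYχ, hZt, hZχ, hk, hn⟩
    · exact Or.inr (caseA hZt hZχ hYγ e4)
    · exact Or.inl (M1 e2 (no_lt_back (Or.inr (Or.inl ⟨hYt, hYχ, hZt, hZχ, hγ⟩)))
        (by rw [hZt]; decide))
    · exact Or.inr (caseC hYt hYχ hZt hZχ hk hn hg e4)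
    · exact Or.inl (M1 e2
        (no_lt_back (Or.inr (Or.inr (Or.inr ⟨hYt, hYχ, hZt, hZχ, hk, hn⟩))))
        (by rw [hZt]; decide))

/-- Among any 4 consecutive <' edges, some adjacent pair composes to <. -/
lemma four {W X Y Z U : S.E} (e1 : S.lt' W X) (e2 : S.lt' X Y)
    (e3 : S.lt' Y Z) (e4 : S.lt' Z U) :
    S.lt W Y ∨ S.lt X Z ∨ S.lt Y U := by
  rcases e2 with hlt | harr
  · rcases T3 hlt e3 e4 with h | h
    · exact Or.inr (Or.inl h)
    · exact Or.inr (Or.inr h)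
  · rcases harr with ⟨hYt, hYχ, hXγ⟩ | ⟨hXt, hXχ, hYt, hYχ, hγ⟩ |
      ⟨hXt, hXχ, hYt, hYχ, hk, hn, hg⟩ | ⟨hXt, hXχ, hYt, hYχ, hk, hn⟩
    · exact Or.inr (Or.inl (caseA hYt hYχ hXγ e3))
    · -- e2 is case (b); look at e1
      left
      have harr2 : S.arrow X Y := Or.inr (Or.inl ⟨hXt, hXχ, hYt, hYχ, hγ⟩)
      rcases e1 with hlt1 | harr1
      · exact M1 hlt1 (no_lt_back harr2) (by rw [hYt]; decide)
      · rcases harr1 with ⟨hXt', hXχ', hWγ⟩ | ⟨_, _, hXt', _, _⟩ |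
          ⟨_, _, _, hXχ', _, _, _⟩ | ⟨_, _, hXt', _, _, _⟩
        · exact caseA hXt' hXχ' hWγ (Or.inr harr2)
        · rw [hXt] at hXt'; exact absurd hXt' (by decide)
        · rw [hXχ] at hXχ'; exact absurd hXχ' (by decide)
        · rw [hXt] at hXt'; exact absurd hXt' (by decide)
    · exact Or.inr (Or.inl (caseC hXt hXχ hYt hYχ hk hn hg e3))
    · -- e2 is case (d); look at e1
      left
      have harr2 : S.arrow X Y := Or.inr (Or.inr (Or.inr ⟨hXt, hXχ, hYt, hYχ, hk, hn⟩))
      rcases e1 with hlt1 | harr1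
      · exact M1 hlt1 (no_lt_back harr2) (by rw [hYt]; decide)
      · rcases harr1 with ⟨_, hXχ', _⟩ | ⟨_, _, hXt', _, _⟩ |
          ⟨hWt, hWχ, hXt', hXχ', hk', hn', hg'⟩ | ⟨_, _, hXt', _, _, _⟩
        · rw [hXχ] at hXχ'; exact absurd hXχ' (by decide)
        · rw [hXt] at hXt'; exact absurd hXt' (by decide)
        · exact caseC hWt hWχ hXt' hXχ' hk' hn' hg' (Or.inr harr2)
        · rw [hXt] at hXt'; exact absurd hXt' (by decide)

lemma lt'_irrefl {X : S.E} : ¬ S.lt' X X := by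
  rintro (h | h)
  · exact S.lt_irrefl _ h
  · rcases h with ⟨hYt, hYχ, hXγ⟩ | ⟨hXt, _, hYt, _, _⟩ |
      ⟨hXt, _, hYt, _, _⟩ | ⟨hXt, _, hYt, _, _⟩
    · obtain ⟨hat, _, _, _, _⟩ := S.A1 X hYχ
      rw [← hXγ, hYt] at hat
      exact absurd hat (by decide)
    · rw [hXt] at hYt; exact absurd hYt (by decide)
    · rw [hXt] at hYt; exact absurd hYt (by decide)
    · rw [hXt] at hYt; exact absurd hYt (by decide)

end Stmt10Aux

open Stmt10Aux in
/-- Under the Lazy Set axioms A0–A2, the relation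
<' = < ∪ ⇒ has no cycles: there is no finite sequence
X₀ <' X₁ <' ⋯ <' Xₙ with X₀ = Xₙ and n ≥ 1. -/
theorem stmt10 (S : LazySys) :
    ¬ ∃ (n : ℕ) (X : ℕ → S.E), 1 ≤ n ∧
      (∀ i < n, S.lt' (X i) (X (i + 1))) ∧ X 0 = X n := by
  have key : ∀ n, ∀ X : ℕ → S.E, 1 ≤ n →
      (∀ i < n, S.lt' (X i) (X (i + 1))) → X 0 = X n → False := by
    intro n
    induction n using Nat.strong_induction_on with
    | _ n ih =>
      intro X hn hE hC
      rcases Nat.lt_or_ge n 2 with h2 | h2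
      · have hn1 : n = 1 := by omega
        subst hn1
        have h := hE 0 (by omega)
        rw [← hC] at h
        exact lt'_irrefl h
      · -- the periodic chain
        have hmod1 : (1 : ℕ) % n = 1 := Nat.mod_eq_of_lt (by omega)
        have hY : ∀ i, S.lt' (X (i % n)) (X ((i + 1) % n)) := by
          intro i
          have h1 : i % n < n := Nat.mod_lt i (by omega)
          have hadd : (i + 1) % n = (i % n + 1) % n := by
            rw [Nat.add_mod, hmod1]
          by_cases h3 : i % n + 1 = n
          · have h4 : (i + 1) % n = 0 := by rw [hadd, h3, Nat.mod_self]
            have h5 := hE _ h1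
            rw [h3, ← hC] at h5
            rw [h4]
            exact h5
          · have h4 : (i + 1) % n = i % n + 1 := by
              rw [hadd]; exact Nat.mod_eq_of_lt (by omega)
            rw [h4]
            exact hE _ h1
        have hfour := four (hY 0) (hY 1) (hY 2) (hY 3)
        have hex : ∃ i, S.lt (X (i % n)) (X ((i + 2) % n)) := by
          rcases hfour with h | h | h
          · exact ⟨0, by simpa using h⟩
          · exact ⟨1, by simpa using h⟩
          · exact ⟨2, by simpa using h⟩
        obtain ⟨i, hlt⟩ := hex
        refine ih (n - 1) (by omega)
          (fun j => if j = n - 1 then X ((i + 2) % n) else X ((i + 2 + j) % n))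
          (by omega) ?_ ?_
        · intro j hj
          by_cases hj2 : j + 1 = n - 1
          · simp only [if_neg (by omega : ¬ j = n - 1), if_pos hj2]
            have hidx : (i + 2 + j) % n = i % n := by
              have he : i + 2 + j = i + n := by omega
              rw [he, Nat.add_mod_right]
            rw [hidx]
            exact Or.inl hlt
          · simp only [if_neg (by omega : ¬ j = n - 1), if_neg hj2]
            have he : i + 2 + (j + 1) = (i + 2 + j) + 1 := by omega
            rw [he]
            exact hY (i + 2 + j)
        · simp only [if_neg (by omega : ¬ (0 : ℕ) = n - 1), if_pos rfl]
          norm_num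
  rintro ⟨n, X, hn, hE, hC⟩
  exact key n X hn hE hC
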